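/- The maximal steered coherence is invariant under local unitaries: for a bipartite state ρ with non-degenerate ρ_B and any unitaries U_A, U_B, 𝒞((U_A⊗U_B) ρ (U_A⊗U_B)†) = 𝒞(ρ), where 𝒞(ρ) = sup over POVM elements M of the coherence of the steered state ρ_B^M in the eigenbasis of ρ_B. -/

import Mathlib

open Matrix BigOperators Kronecker ComplexOrder

noncomputable section

def ptraceA {dA dB : ℕ} (ρ : Matrix (Fin dA × Fin dB) (Fin dA × Fin dB) ℂ) :
    Matrix (Fin dB) (Fin dB) ℂ :=
  fun j j' => ∑ a, ρ (a, j) (a, j')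

def IsPOVMElem {d : ℕ} (M : Matrix (Fin d) (Fin d) ℂ) : Prop :=
  M.PosSemidef ∧ (1 - M).PosSemidef

/-- Maximal steered coherence of ρ with respect to the eigenbasis ξ of ρ_B:
the supremum over POVM elements M of the l1-coherence of the steered state. -/
def msc {dA dB : ℕ} (ρ : Matrix (Fin dA × Fin dB) (Fin dA × Fin dB) ℂ)
    (ξ : Fin dB → (Fin dB → ℂ)) : ℝ :=
  sSup {c | ∃ M : Matrix (Fin dA) (Fin dA) ℂ, IsPOVMElem M ∧
    0 < (((M ⊗ₖ (1 : Matrix (Fin dB) (Fin dB) ℂ)) * ρ).trace).re ∧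
    c = (∑ i, ∑ j ∈ Finset.univ.filter (· ≠ i),
          ‖star (ξ i) ⬝ᵥ (ptraceA ((M ⊗ₖ 1) * ρ) *ᵥ ξ j)‖) /
        (((M ⊗ₖ (1 : Matrix (Fin dB) (Fin dB) ℂ)) * ρ).trace).re}

def mscSet {dA dB : ℕ} (ρ : Matrix (Fin dA × Fin dB) (Fin dA × Fin dB) ℂ)
    (ξ : Fin dB → (Fin dB → ℂ)) : Set ℝ :=
  {c | ∃ M : Matrix (Fin dA) (Fin dA) ℂ, IsPOVMElem M ∧
    0 < (((M ⊗ₖ (1 : Matrix (Fin dB) (Fin dB) ℂ)) * ρ).trace).re ∧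
    c = (∑ i, ∑ j ∈ Finset.univ.filter (· ≠ i),
          ‖star (ξ i) ⬝ᵥ (ptraceA ((M ⊗ₖ 1) * ρ) *ᵥ ξ j)‖) /
        (((M ⊗ₖ (1 : Matrix (Fin dB) (Fin dB) ℂ)) * ρ).trace).re}

lemma kron_conjT {dA dB : ℕ} (A : Matrix (Fin dA) (Fin dA) ℂ)
    (B : Matrix (Fin dB) (Fin dB) ℂ) : (A ⊗ₖ B)ᴴ = Aᴴ ⊗ₖ Bᴴ := by
  ext ⟨a,b⟩ ⟨c,d⟩
  simp [conjTranspose_apply, kroneckerMap_apply, mul_comm]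

lemma sum5 {M : Type*} [AddCommMonoid M] {α β γ δ ε : Type*}
    [Fintype α] [Fintype β] [Fintype γ] [Fintype δ] [Fintype ε]
    (f : α → β → γ → δ → ε → M) :
    ∑ a, ∑ b, ∑ c, ∑ d, ∑ e, f a b c d e = ∑ c, ∑ e, ∑ b, ∑ d, ∑ a, f a b c d e := by
  trans ∑ a, ∑ c, ∑ b, ∑ d, ∑ e, f a b c d e
  · exact Finset.sum_congr rfl fun _ _ => Finset.sum_comm
  trans ∑ c, ∑ a, ∑ b, ∑ d, ∑ e, f a b c d e
  · exact Finset.sum_comm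
  trans ∑ c, ∑ a, ∑ b, ∑ e, ∑ d, f a b c d e
  · exact Finset.sum_congr rfl fun _ _ => Finset.sum_congr rfl fun _ _ =>
      Finset.sum_congr rfl fun _ _ => Finset.sum_comm
  trans ∑ c, ∑ a, ∑ e, ∑ b, ∑ d, f a b c d e
  · exact Finset.sum_congr rfl fun _ _ => Finset.sum_congr rfl fun _ _ => Finset.sum_comm
  trans ∑ c, ∑ e, ∑ a, ∑ b, ∑ d, f a b c d e
  · exact Finset.sum_congr rfl fun _ _ => Finset.sum_comm
  trans ∑ c, ∑ e, ∑ b, ∑ a, ∑ d, f a b c d e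
  · exact Finset.sum_congr rfl fun _ _ => Finset.sum_congr rfl fun _ _ => Finset.sum_comm
  exact Finset.sum_congr rfl fun _ _ => Finset.sum_congr rfl fun _ _ =>
    Finset.sum_congr rfl fun _ _ => Finset.sum_comm

lemma ptraceA_kron_mul_kron {dA dB : ℕ} (A C : Matrix (Fin dA) (Fin dA) ℂ)
    (B D : Matrix (Fin dB) (Fin dB) ℂ)
    (ρ : Matrix (Fin dA × Fin dB) (Fin dA × Fin dB) ℂ) :
    ptraceA ((A ⊗ₖ B) * ρ * (C ⊗ₖ D)) = B * ptraceA (((C * A) ⊗ₖ 1) * ρ) * D := by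
  ext j j'
  simp only [ptraceA, Matrix.mul_apply, kroneckerMap_apply, Fintype.sum_prod_type,
    Matrix.one_apply, Finset.sum_mul, Finset.mul_sum, mul_ite, ite_mul, mul_zero, zero_mul,
    mul_one, one_mul, Finset.sum_ite_eq, Finset.mem_univ, if_true]
  rw [sum5 (fun a b c d e => A a d * B j e * ρ (d, e) (b, c) * (C b a * D c j'))]
  exact Finset.sum_congr rfl fun _ _ => Finset.sum_congr rfl fun _ _ =>
    Finset.sum_congr rfl fun _ _ => Finset.sum_congr rfl fun _ _ =>
    Finset.sum_congr rfl fun _ _ => by ring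

lemma split_lemma {dA dB : ℕ} (M U : Matrix (Fin dA) (Fin dA) ℂ)
    (V : Matrix (Fin dB) (Fin dB) ℂ)
    (ρ : Matrix (Fin dA × Fin dB) (Fin dA × Fin dB) ℂ) :
    (M ⊗ₖ (1 : Matrix (Fin dB) (Fin dB) ℂ)) * ((U ⊗ₖ V) * ρ * (U ⊗ₖ V)ᴴ) =
      ((M * U) ⊗ₖ V) * ρ * (Uᴴ ⊗ₖ Vᴴ) := by
  rw [kron_conjT, ← Matrix.mul_assoc, ← Matrix.mul_assoc, ← Matrix.mul_kronecker_mul,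
    Matrix.one_mul]

lemma trace_eq {dA dB : ℕ} (M U : Matrix (Fin dA) (Fin dA) ℂ)
    (V : Matrix (Fin dB) (Fin dB) ℂ) (hV : Vᴴ * V = 1)
    (ρ : Matrix (Fin dA × Fin dB) (Fin dA × Fin dB) ℂ) :
    ((M ⊗ₖ (1 : Matrix (Fin dB) (Fin dB) ℂ)) * ((U ⊗ₖ V) * ρ * (U ⊗ₖ V)ᴴ)).trace =
      (((Uᴴ * M * U) ⊗ₖ (1 : Matrix (Fin dB) (Fin dB) ℂ)) * ρ).trace := by
  rw [split_lemma, Matrix.trace_mul_comm, ← Matrix.mul_assoc, ← Matrix.mul_kronecker_mul,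
    hV, ← Matrix.mul_assoc]

lemma ptraceA_eq {dA dB : ℕ} (M U : Matrix (Fin dA) (Fin dA) ℂ)
    (V : Matrix (Fin dB) (Fin dB) ℂ)
    (ρ : Matrix (Fin dA × Fin dB) (Fin dA × Fin dB) ℂ) :
    ptraceA ((M ⊗ₖ (1 : Matrix (Fin dB) (Fin dB) ℂ)) * ((U ⊗ₖ V) * ρ * (U ⊗ₖ V)ᴴ)) =
      V * ptraceA (((Uᴴ * M * U) ⊗ₖ 1) * ρ) * Vᴴ := by
  rw [split_lemma, ptraceA_kron_mul_kron, ← Matrix.mul_assoc]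

lemma entry_eq {dA dB : ℕ} (M U : Matrix (Fin dA) (Fin dA) ℂ)
    (V : Matrix (Fin dB) (Fin dB) ℂ) (hV : Vᴴ * V = 1)
    (ρ : Matrix (Fin dA × Fin dB) (Fin dA × Fin dB) ℂ)
    (x y : Fin dB → ℂ) :
    star (V *ᵥ x) ⬝ᵥ (ptraceA ((M ⊗ₖ (1 : Matrix (Fin dB) (Fin dB) ℂ)) *
        ((U ⊗ₖ V) * ρ * (U ⊗ₖ V)ᴴ)) *ᵥ (V *ᵥ y)) =
      star x ⬝ᵥ (ptraceA (((Uᴴ * M * U) ⊗ₖ 1) * ρ) *ᵥ y) := by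
  rw [ptraceA_eq, Matrix.star_mulVec, Matrix.mulVec_mulVec, Matrix.mul_assoc (V * _),
    hV, Matrix.mul_one, Matrix.dotProduct_mulVec, Matrix.vecMul_vecMul,
    ← Matrix.mul_assoc, hV, Matrix.one_mul, ← Matrix.dotProduct_mulVec]

lemma povm_conj {dA : ℕ} {M : Matrix (Fin dA) (Fin dA) ℂ} (hM : IsPOVMElem M)
    (U : Matrix (Fin dA) (Fin dA) ℂ) (hU : Uᴴ * U = 1) :
    IsPOVMElem (Uᴴ * M * U) := by
  refine ⟨hM.1.conjTranspose_mul_mul_same U, ?_⟩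
  have : (1 : Matrix (Fin dA) (Fin dA) ℂ) - Uᴴ * M * U = Uᴴ * (1 - M) * U := by
    rw [Matrix.mul_sub, Matrix.sub_mul, Matrix.mul_one, hU]
  rw [this]
  exact hM.2.conjTranspose_mul_mul_same U

lemma mscSet_subset {dA dB : ℕ} (ρ : Matrix (Fin dA × Fin dB) (Fin dA × Fin dB) ℂ)
    (ξ : Fin dB → (Fin dB → ℂ))
    (U : Matrix (Fin dA) (Fin dA) ℂ) (hU : Uᴴ * U = 1)
    (V : Matrix (Fin dB) (Fin dB) ℂ) (hV : Vᴴ * V = 1) :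
    mscSet ((U ⊗ₖ V) * ρ * (U ⊗ₖ V)ᴴ) (fun i => V *ᵥ ξ i) ⊆ mscSet ρ ξ := by
  rintro c ⟨M, hM, hpos, rfl⟩
  refine ⟨Uᴴ * M * U, povm_conj hM U hU, ?_, ?_⟩
  · rwa [← trace_eq M U V hV ρ]
  · rw [trace_eq M U V hV ρ]
    congr 1
    refine Finset.sum_congr rfl fun i _ => Finset.sum_congr rfl fun j _ => ?_
    rw [entry_eq M U V hV ρ]

lemma msc_eq_sSup {dA dB : ℕ} (ρ : Matrix (Fin dA × Fin dB) (Fin dA × Fin dB) ℂ)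
    (ξ : Fin dB → (Fin dB → ℂ)) : msc ρ ξ = sSup (mscSet ρ ξ) := rfl

/-- maximal steered coherence is invariant under local unitaries. -/
theorem stmt4 {dA dB : ℕ}
    (ρ : Matrix (Fin dA × Fin dB) (Fin dA × Fin dB) ℂ)
    (hρ : ρ.PosSemidef ∧ ρ.trace = 1)
    (ξ : Fin dB → (Fin dB → ℂ))
    (horth : ∀ i j, star (ξ i) ⬝ᵥ ξ j = if i = j then (1 : ℂ) else 0)
    (μ : Fin dB → ℝ) (hμ : Function.Injective μ)
    (heig : ∀ i, ptraceA ρ *ᵥ ξ i = (μ i : ℂ) • ξ i)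
    (U_A : Matrix (Fin dA) (Fin dA) ℂ) (hUA : U_A ∈ Matrix.unitaryGroup (Fin dA) ℂ)
    (U_B : Matrix (Fin dB) (Fin dB) ℂ) (hUB : U_B ∈ Matrix.unitaryGroup (Fin dB) ℂ) :
    msc ((U_A ⊗ₖ U_B) * ρ * (U_A ⊗ₖ U_B)ᴴ) (fun i => U_B *ᵥ ξ i) = msc ρ ξ := by
  have hUA1 : U_Aᴴ * U_A = 1 := by
    have := hUA.1; rwa [Matrix.star_eq_conjTranspose] at this
  have hUA2 : U_A * U_Aᴴ = 1 := by
    have := hUA.2; rwa [Matrix.star_eq_conjTranspose] at this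
  have hUB1 : U_Bᴴ * U_B = 1 := by
    have := hUB.1; rwa [Matrix.star_eq_conjTranspose] at this
  have hUB2 : U_B * U_Bᴴ = 1 := by
    have := hUB.2; rwa [Matrix.star_eq_conjTranspose] at this
  have key : mscSet ((U_A ⊗ₖ U_B) * ρ * (U_A ⊗ₖ U_B)ᴴ) (fun i => U_B *ᵥ ξ i) = mscSet ρ ξ := by
    refine Set.Subset.antisymm (mscSet_subset ρ ξ U_A hUA1 U_B hUB1) ?_
    have h2 := mscSet_subset ((U_A ⊗ₖ U_B) * ρ * (U_A ⊗ₖ U_B)ᴴ) (fun i => U_B *ᵥ ξ i)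
      U_Aᴴ (by rw [conjTranspose_conjTranspose, hUA2]) U_Bᴴ
      (by rw [conjTranspose_conjTranspose, hUB2])
    have e1 : (U_Aᴴ ⊗ₖ U_Bᴴ) * ((U_A ⊗ₖ U_B) * ρ * (U_A ⊗ₖ U_B)ᴴ) * (U_Aᴴ ⊗ₖ U_Bᴴ)ᴴ = ρ := by
      rw [kron_conjT, kron_conjT, conjTranspose_conjTranspose, conjTranspose_conjTranspose]
      have hXY : (U_Aᴴ ⊗ₖ U_Bᴴ) * (U_A ⊗ₖ U_B) = 1 := by
        rw [← Matrix.mul_kronecker_mul, hUA1, hUB1, Matrix.one_kronecker_one]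
      simp only [Matrix.mul_assoc]
      rw [hXY, Matrix.mul_one, ← Matrix.mul_assoc, hXY, Matrix.one_mul]
    rw [e1] at h2
    simp only [Matrix.mulVec_mulVec, hUB1, Matrix.one_mulVec] at h2
    exact h2
  rw [msc_eq_sSup, msc_eq_sSup, key]
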